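/- Let f : ℂ → ℂ be a nonconstant polynomial, D = {z : |z| ≤ r} a closed disc with f nonvanishing on the boundary circle B = {|z| = r}, and t ∈ ℂ. If v ∈ D realizes the minimum of |t − f(z)| over z ∈ D and t ≠ f(v), then v is a critical point of f or v ∈ B. -/

import Mathlib

theorem stmt_11 (p : Polynomial ℂ) (hdeg : 1 ≤ p.natDegree) (r : ℝ) (hr : 0 < r)
    (hB : ∀ z : ℂ, ‖z‖ = r → p.eval z ≠ 0)
    (t v : ℂ) (hv : ‖v‖ ≤ r)
    (hmin : ∀ z : ℂ, ‖z‖ ≤ r →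
      ‖t - p.eval v‖ ≤ ‖t - p.eval z‖)
    (ht : t ≠ p.eval v) :
    (Polynomial.derivative p).eval v = 0 ∨ ‖v‖ = r := by
  by_cases hvr : ‖v‖ = r
  · exact Or.inr hvr
  have hlt : ‖v‖ < r := lt_of_le_of_ne hv hvr
  left
  set f : ℂ → ℂ := fun z => t - p.eval z with hf
  have hnear : ∀ᶠ z in nhds v, ‖z‖ < r := by
    have : IsOpen {z : ℂ | ‖z‖ < r} :=
      isOpen_lt continuous_norm continuous_const
    exact this.eventually_mem hlt
  have hmin' : IsLocalMin (norm ∘ f) v := by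
    filter_upwards [hnear] with z hz
    exact hmin z hz.le
  have hdiff : ∀ᶠ z in nhds v, DifferentiableAt ℂ f z :=
    Filter.Eventually.of_forall fun z =>
      (differentiableAt_const t).sub (Polynomial.differentiableAt p)
  rcases Complex.eventually_eq_or_eq_zero_of_isLocalMin_norm hdiff hmin' with hconst | hzero
  · have hd : deriv f v = 0 := by
      have : f =ᶠ[nhds v] fun _ => f v := hconst
      rw [this.deriv_eq, deriv_const]
    have : deriv f v = -(Polynomial.derivative p).eval v := by
      have : HasDerivAt f (0 - (Polynomial.derivative p).eval v) v :=
        (hasDerivAt_const v t).sub (Polynomial.hasDerivAt p v)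
      simpa using this.deriv
    rw [this] at hd
    simpa using hd
  · exact absurd (sub_eq_zero.mp hzero) ht
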